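/- For every γ ∈ ℕ, Σ_{τ=0}^{γ} (𝔠̄_{γ,γ,2τ})²/(2τ+2)² = (γ+2)·(2γ+3)·(2γ+5) / (15·π·(γ+1)·(γ+3)). -/

import Mathlib

open MeasureTheory

/-- Gegenbauer (ultraspherical) polynomial `C_n^{(2)}` of degree `n` with parameter `2`,
as a real-valued function. -/
noncomputable def geg (n : ℕ) (y : ℝ) : ℝ :=
  ∑ k ∈ Finset.range (n / 2 + 1),
    (-1:ℝ) ^ k *
      ((Nat.factorial (n - k + 1) : ℝ) /
        ((Nat.factorial k : ℝ) * (Nat.factorial (n - 2 * k) : ℝ))) *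
      (2 * y) ^ (n - 2 * k)

/-- The normalization constant `𝔴_n = √(8/π)/√((n+1)(n+3))`. -/
noncomputable def wYM (n : ℕ) : ℝ :=
  Real.sqrt (8 / Real.pi) / Real.sqrt (((n:ℝ) + 1) * ((n:ℝ) + 3))

/-- The quadratic Fourier coefficients `𝔠̄_{ijm}` of the spherically symmetric equivariant
Yang–Mills equation on the Einstein cylinder. -/
noncomputable def cbar (i j m : ℕ) : ℝ :=
  wYM i * wYM j * wYM m *
    ∫ y in (-1:ℝ)..1, geg i y * geg j y * geg m y * (1 - y ^ 2) ^ ((3:ℝ) / 2)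

/-- The cubic Fourier coefficients `𝔠_{ijkm}` of the spherically symmetric equivariant
Yang–Mills equation on the Einstein cylinder. -/
noncomputable def cquad (i j k m : ℕ) : ℝ :=
  wYM i * wYM j * wYM k * wYM m *
    ∫ y in (-1:ℝ)..1, geg i y * geg j y * geg k y * geg m y * (1 - y ^ 2) ^ ((5:ℝ) / 2)

open Finset


lemma geg_zero (y : ℝ) : geg 0 y = 1 := by simp [geg]

lemma geg_one (y : ℝ) : geg 1 y = 4 * y := by
  simp [geg, Nat.factorial]; ring

lemma geg_cont (n : ℕ) : Continuous (geg n) := by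
  unfold geg
  apply continuous_finset_sum
  intro k _
  fun_prop

noncomputable def W (y : ℝ) : ℝ := (1 - y ^ 2) ^ ((3:ℝ)/2)

lemma W_cont : Continuous W := by
  apply Continuous.rpow_const (by fun_prop)
  intro x; right; norm_num

lemma intW (f : ℝ → ℝ) (hf : Continuous f) :
    IntervalIntegrable (fun y => f y * W y) volume (-1) 1 :=
  (hf.mul W_cont).intervalIntegrable _ _

noncomputable def Mom (s : ℕ) : ℝ := ∫ y in (-1:ℝ)..1, y ^ (2*s) * W y

lemma cont_aux1 : Continuous fun y : ℝ => (1 - y^2) ^ ((3:ℝ)/2 - 1) := by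
  apply Continuous.rpow_const (by fun_prop)
  intro x; right; norm_num

lemma cont_aux2 : Continuous fun y : ℝ => (1 - y^2) ^ ((5:ℝ)/2) := by
  apply Continuous.rpow_const (by fun_prop)
  intro x; right; norm_num

lemma cont_aux3 : Continuous fun y : ℝ => (1 - y^2) ^ ((5:ℝ)/2 - 1) := by
  apply Continuous.rpow_const (by fun_prop)
  intro x; right; norm_num

lemma Mom_zero : Mom 0 = 3 * Real.pi / 8 := by
  have hd : ∀ y ∈ Set.uIcc (-1:ℝ) 1,
      HasDerivAt (fun y : ℝ => y * (1 - y^2) ^ ((3:ℝ)/2))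
        ((1 - y^2) ^ ((3:ℝ)/2) + y * (((3:ℝ)/2) * (1 - y^2) ^ ((3:ℝ)/2 - 1) * (-2 * y))) y := by
    intro y _
    have h1 : HasDerivAt (fun y : ℝ => 1 - y^2) (-2*y) y := by
      simpa using ((hasDerivAt_pow 2 y).const_sub 1)
    have h2 := (Real.hasDerivAt_rpow_const (x := 1 - y^2) (p := (3:ℝ)/2)
      (Or.inr (by norm_num))).comp y h1
    simpa [mul_comm, mul_assoc] using (hasDerivAt_id y).fun_mul h2
  have hint : IntervalIntegrable (fun y : ℝ =>
      (1 - y^2) ^ ((3:ℝ)/2) + y * (((3:ℝ)/2) * (1 - y^2) ^ ((3:ℝ)/2 - 1) * (-2 * y)))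
      volume (-1) 1 := by
    apply Continuous.intervalIntegrable
    have h1 : Continuous fun y : ℝ => (1 - y^2) ^ ((3:ℝ)/2) := W_cont
    have h2 := cont_aux1
    continuity
  have key := intervalIntegral.integral_eq_sub_of_hasDerivAt hd hint
  have h0 : ((1:ℝ) - 1^2) ^ ((3:ℝ)/2) = 0 := by
    norm_num
  have h0' : ((1:ℝ) - (-1:ℝ)^2) ^ ((3:ℝ)/2) = 0 := by
    norm_num
  rw [h0] at key
  have key2 : (∫ y in (-1:ℝ)..1,
      ((1 - y^2) ^ ((3:ℝ)/2) + y * (((3:ℝ)/2) * (1 - y^2) ^ ((3:ℝ)/2 - 1) * (-2 * y)))) = 0 := by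
    rw [key]; norm_num
  have hpt : Set.EqOn (fun y : ℝ =>
      ((1 - y^2) ^ ((3:ℝ)/2) + y * (((3:ℝ)/2) * (1 - y^2) ^ ((3:ℝ)/2 - 1) * (-2 * y))))
      (fun y : ℝ => 4 * ((1 - y^2) ^ ((3:ℝ)/2)) - 3 * Real.sqrt (1 - y^2))
      (Set.uIcc (-1:ℝ) 1) := by
    intro y hy
    have hy' : y^2 ≤ 1 := by
      rw [Set.uIcc_of_le (by norm_num)] at hy
      obtain ⟨h1, h2⟩ := hy
      nlinarith
    have hnn : (0:ℝ) ≤ 1 - y^2 := by linarith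
    have e1 : (1 - y^2) ^ ((3:ℝ)/2 - 1) = Real.sqrt (1 - y^2) := by
      rw [Real.sqrt_eq_rpow]; norm_num
    have e2 : (1 - y^2) ^ ((3:ℝ)/2) = (1 - y^2) * Real.sqrt (1 - y^2) := by
      rw [Real.sqrt_eq_rpow, ← Real.rpow_one_add' hnn (by norm_num : (1:ℝ) + 1/2 ≠ 0)]
      norm_num
    simp only [e1, e2]
    ring
  rw [intervalIntegral.integral_congr hpt] at key2
  have hsq : IntervalIntegrable (fun y : ℝ => Real.sqrt (1 - y^2)) volume (-1) 1 := by
    apply Continuous.intervalIntegrable; fun_prop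
  have hW : IntervalIntegrable (fun y : ℝ => 4 * ((1 - y^2) ^ ((3:ℝ)/2))) volume (-1) 1 := by
    apply Continuous.intervalIntegrable
    exact continuous_const.mul W_cont
  rw [intervalIntegral.integral_sub hW ((continuous_const.fun_mul (by fun_prop)).intervalIntegrable _ _),
    intervalIntegral.integral_const_mul, intervalIntegral.integral_const_mul,
    integral_sqrt_one_sub_sq] at key2
  have : Mom 0 = ∫ y in (-1:ℝ)..1, (1 - y^2) ^ ((3:ℝ)/2) := by
    unfold Mom W
    norm_num
  rw [this]
  linarith [key2]


lemma Mom_succ (s : ℕ) : (2*(s:ℝ)+6) * Mom (s+1) = (2*(s:ℝ)+1) * Mom s := by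
  have hd : ∀ y ∈ Set.uIcc (-1:ℝ) 1,
      HasDerivAt (fun y : ℝ => y ^ (2*s+1) * (1 - y^2) ^ ((5:ℝ)/2))
        ((2*(s:ℝ)+1) * y ^ (2*s) * (1 - y^2) ^ ((5:ℝ)/2)
          + y ^ (2*s+1) * (((5:ℝ)/2) * (1 - y^2) ^ ((5:ℝ)/2 - 1) * (-2 * y))) y := by
    intro y _
    have h1 : HasDerivAt (fun y : ℝ => 1 - y^2) (-2*y) y := by
      simpa using ((hasDerivAt_pow 2 y).const_sub 1)
    have h2 := (Real.hasDerivAt_rpow_const (x := 1 - y^2) (p := (5:ℝ)/2)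
      (Or.inr (by norm_num))).comp y h1
    have h3 := (hasDerivAt_pow (2*s+1) y).mul h2
    have e : ((2*s+1 : ℕ) : ℝ) = 2*(s:ℝ)+1 := by push_cast; ring
    simp only [Function.comp_apply] at h3
    refine h3.congr_deriv ?_
    rw [e]
    push_cast
    ring
  have hint : IntervalIntegrable (fun y : ℝ =>
      (2*(s:ℝ)+1) * y ^ (2*s) * (1 - y^2) ^ ((5:ℝ)/2)
        + y ^ (2*s+1) * (((5:ℝ)/2) * (1 - y^2) ^ ((5:ℝ)/2 - 1) * (-2 * y)))
      volume (-1) 1 := by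
    apply Continuous.intervalIntegrable
    have h2 := cont_aux2
    have h3 := cont_aux3
    continuity
  have key := intervalIntegral.integral_eq_sub_of_hasDerivAt hd hint
  have key2 : (∫ y in (-1:ℝ)..1,
      ((2*(s:ℝ)+1) * y ^ (2*s) * (1 - y^2) ^ ((5:ℝ)/2)
        + y ^ (2*s+1) * (((5:ℝ)/2) * (1 - y^2) ^ ((5:ℝ)/2 - 1) * (-2 * y)))) = 0 := by
    rw [key]; norm_num
  have hpt : Set.EqOn (fun y : ℝ =>
      ((2*(s:ℝ)+1) * y ^ (2*s) * (1 - y^2) ^ ((5:ℝ)/2)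
        + y ^ (2*s+1) * (((5:ℝ)/2) * (1 - y^2) ^ ((5:ℝ)/2 - 1) * (-2 * y))))
      (fun y : ℝ => (2*(s:ℝ)+1) * (y ^ (2*s) * W y) - (2*(s:ℝ)+6) * (y ^ (2*(s+1)) * W y))
      (Set.uIcc (-1:ℝ) 1) := by
    intro y hy
    have hy' : y^2 ≤ 1 := by
      rw [Set.uIcc_of_le (by norm_num)] at hy
      obtain ⟨h1, h2⟩ := hy
      nlinarith
    have hnn : (0:ℝ) ≤ 1 - y^2 := by linarith
    have e1 : (1 - y^2) ^ ((5:ℝ)/2 - 1) = W y := by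
      unfold W; norm_num
    have e2 : (1 - y^2) ^ ((5:ℝ)/2) = (1 - y^2) * W y := by
      unfold W
      rw [← Real.rpow_one_add' hnn (by norm_num : (1:ℝ) + 3/2 ≠ 0)]
      norm_num
    simp only [e1, e2]
    have : y ^ (2*(s+1)) = y ^ (2*s) * y^2 := by ring
    rw [this]
    have : y ^ (2*s+1) = y ^ (2*s) * y := by ring
    rw [this]
    ring
  rw [intervalIntegral.integral_congr hpt] at key2
  have i1 : IntervalIntegrable (fun y : ℝ => (2*(s:ℝ)+1) * (y ^ (2*s) * W y)) volume (-1) 1 := by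
    exact (continuous_const.mul ((continuous_pow _).mul W_cont)).intervalIntegrable _ _
  have i2 : IntervalIntegrable (fun y : ℝ => (2*(s:ℝ)+6) * (y ^ (2*(s+1)) * W y)) volume (-1) 1 := by
    exact (continuous_const.mul ((continuous_pow _).mul W_cont)).intervalIntegrable _ _
  rw [intervalIntegral.integral_sub i1 i2, intervalIntegral.integral_const_mul,
    intervalIntegral.integral_const_mul] at key2
  unfold Mom
  linarith [key2]

lemma Mom_closed (s : ℕ) : Mom s = (3 * Real.pi / 4) *
    (Nat.factorial (2*s) : ℝ) / ((4:ℝ)^s * (Nat.factorial s : ℝ) * (Nat.factorial (s+2) : ℝ)) := by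
  induction s with
  | zero => simp [Mom_zero, Nat.factorial]; ring
  | succ n ih =>
    have h := Mom_succ n
    rw [ih] at h
    have h6 : (2*(n:ℝ)+6) ≠ 0 := by positivity
    have f1 : (Nat.factorial (2*(n+1)) : ℝ) = (2*(n:ℝ)+2)*(2*(n:ℝ)+1)*(Nat.factorial (2*n):ℝ) := by
      have e : 2*(n+1) = ((2*n+1)) + 1 := by omega
      rw [e, Nat.factorial_succ, Nat.factorial_succ]
      push_cast; ring
    have f2 : (Nat.factorial (n+1):ℝ) = ((n:ℝ)+1)*(Nat.factorial n:ℝ) := by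
      rw [Nat.factorial_succ]; push_cast; ring
    have f3 : (Nat.factorial (n+1+2):ℝ) = ((n:ℝ)+3)*(Nat.factorial (n+2):ℝ) := by
      have e : n+1+2 = (n+2) + 1 := by omega
      rw [e, Nat.factorial_succ]; push_cast; ring
    rw [f1, f2, f3, pow_succ]
    have hfn : (Nat.factorial n : ℝ) ≠ 0 := by positivity
    have hf2n : (Nat.factorial (2*n) : ℝ) ≠ 0 := by positivity
    have hfn2 : (Nat.factorial (n+2) : ℝ) ≠ 0 := by positivity
    have h4 : ((4:ℝ)^n) ≠ 0 := by positivity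
    have hn1 : ((n:ℝ)+1) ≠ 0 := by positivity
    have hn3 : ((n:ℝ)+3) ≠ 0 := by positivity
    have hMom : Mom (n+1) = (2*(n:ℝ)+1) * (3 * Real.pi / 4 * (Nat.factorial (2*n):ℝ) /
        (4 ^ n * (Nat.factorial n:ℝ) * (Nat.factorial (n+2):ℝ))) / (2*(n:ℝ)+6) := by
      field_simp at h ⊢
      linarith [h]
    rw [hMom]
    field_simp
    ring


noncomputable def Ee (p : ℕ) (y : ℝ) (k : ℕ) : ℝ :=
  (-1:ℝ)^k * ((Nat.factorial (2*p - k + 1) : ℝ) /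
    ((Nat.factorial k : ℝ) * (Nat.factorial (2*(p-k)) : ℝ))) * (2*y)^(2*(p-k))

noncomputable def Oo (p : ℕ) (y : ℝ) (k : ℕ) : ℝ :=
  (-1:ℝ)^k * ((Nat.factorial (2*p + 2 - k) : ℝ) /
    ((Nat.factorial k : ℝ) * (Nat.factorial (2*(p-k)+1) : ℝ))) * (2*y)^(2*(p-k)+1)

lemma geg_even (p : ℕ) (y : ℝ) : geg (2*p) y = ∑ k ∈ range (p+1), Ee p y k := by
  unfold geg Ee
  rw [show 2*p/2 + 1 = p + 1 by omega]
  refine Finset.sum_congr rfl (fun k hk => ?_)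
  have hk' : k ≤ p := Nat.lt_succ_iff.mp (mem_range.mp hk)
  rw [show 2*p - 2*k = 2*(p-k) by omega]

lemma geg_odd (p : ℕ) (y : ℝ) : geg (2*p+1) y = ∑ k ∈ range (p+1), Oo p y k := by
  unfold geg Oo
  rw [show (2*p+1)/2 + 1 = p + 1 by omega]
  refine Finset.sum_congr rfl (fun k hk => ?_)
  have hk' : k ≤ p := Nat.lt_succ_iff.mp (mem_range.mp hk)
  rw [show 2*p+1 - k + 1 = 2*p + 2 - k by omega,
      show 2*p+1 - 2*k = 2*(p-k)+1 by omega]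

lemma fct (m : ℕ) : ((Nat.factorial m : ℝ)) ≠ 0 :=
  Nat.cast_ne_zero.mpr (Nat.factorial_ne_zero m)

lemma even_interior (p i : ℕ) (hi : i < p) (y : ℝ) :
    (2*(p:ℝ)+2) * Ee (p+1) y (i+1)
      = 2*(2*(p:ℝ)+3)*y * Oo p y (i+1) - (2*(p:ℝ)+4) * Ee p y i := by
  obtain ⟨j, rfl⟩ : ∃ j, p = i + j + 1 := ⟨p - i - 1, by omega⟩
  unfold Ee Oo
  rw [show 2*(i+j+1+1) - (i+1) + 1 = (i+2*j+3)+1 by omega,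
      show (i+j+1+1) - (i+1) = j+1 by omega,
      show 2*(i+j+1) + 2 - (i+1) = i+2*j+3 by omega,
      show (i+j+1) - (i+1) = j by omega,
      show 2*(i+j+1) - i + 1 = i+2*j+3 by omega,
      show (i+j+1) - i = j+1 by omega]
  rw [Nat.factorial_succ (i+2*j+3)]
  rw [show 2*(j+1) = (2*j+1)+1 by omega, Nat.factorial_succ (2*j+1),
      Nat.factorial_succ i]
  push_cast
  field_simp
  ring

lemma even_k0 (p : ℕ) (y : ℝ) :
    (2*(p:ℝ)+2) * Ee (p+1) y 0 = 2*(2*(p:ℝ)+3)*y * Oo p y 0 := by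
  unfold Ee Oo
  rw [show 2*(p+1) - 0 + 1 = (2*p+2)+1 by omega,
      show (p+1) - 0 = p+1 by omega,
      show 2*p + 2 - 0 = 2*p+2 by omega,
      show p - 0 = p by omega]
  rw [show 2*(p+1) = (2*p+1)+1 by omega]
  rw [Nat.factorial_succ (2*p+2)]
  rw [show 2*p+2 = (2*p+1)+1 by omega]
  rw [Nat.factorial_succ (2*p+1)]
  push_cast
  field_simp
  ring

lemma even_top (p : ℕ) (y : ℝ) :
    (2*(p:ℝ)+2) * Ee (p+1) y (p+1) = -((2*(p:ℝ)+4) * Ee p y p) := by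
  unfold Ee
  rw [show 2*(p+1) - (p+1) + 1 = (p+1)+1 by omega,
      show (p+1) - (p+1) = 0 by omega,
      show 2*p - p + 1 = p+1 by omega,
      show p - p = 0 by omega]
  rw [Nat.factorial_succ (p+1), Nat.factorial_succ p, pow_succ]
  push_cast
  field_simp
  ring

lemma odd_interior (p i : ℕ) (hi : i ≤ p) (y : ℝ) :
    (2*(p:ℝ)+3) * Oo (p+1) y (i+1)
      = 2*(2*(p:ℝ)+4)*y * Ee (p+1) y (i+1) - (2*(p:ℝ)+5) * Oo p y i := by
  obtain ⟨j, rfl⟩ : ∃ j, p = i + j := ⟨p - i, by omega⟩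
  unfold Ee Oo
  rw [show 2*(i+j+1) + 2 - (i+1) = (i+2*j+2)+1 by omega,
      show (i+j+1) - (i+1) = j by omega,
      show 2*(i+j+1) - (i+1) + 1 = i+2*j+2 by omega,
      show 2*(i+j) + 2 - i = i+2*j+2 by omega,
      show (i+j) - i = j by omega]
  rw [Nat.factorial_succ (i+2*j+2), Nat.factorial_succ i, Nat.factorial_succ (2*j)]
  push_cast
  field_simp
  ring

lemma odd_k0 (p : ℕ) (y : ℝ) :
    (2*(p:ℝ)+3) * Oo (p+1) y 0 = 2*(2*(p:ℝ)+4)*y * Ee (p+1) y 0 := by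
  unfold Ee Oo
  rw [show 2*(p+1) + 2 - 0 = (2*p+3)+1 by omega,
      show (p+1) - 0 = p+1 by omega,
      show 2*(p+1) - 0 + 1 = (2*p+2)+1 by omega,
      show 2*(p+1)+1 = (2*p+2)+1 by omega]
  rw [show 2*(p+1) = (2*p+1)+1 by omega]
  rw [Nat.factorial_succ (2*p+3)]
  rw [show 2*p+3 = (2*p+2)+1 by omega]
  rw [Nat.factorial_succ (2*p+2)]
  rw [show 2*p+2 = (2*p+1)+1 by omega]
  rw [Nat.factorial_succ (2*p+1)]
  push_cast
  field_simp
  ring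

lemma geg_rec (n : ℕ) (y : ℝ) :
    ((n:ℝ)+2) * geg (n+2) y = 2*((n:ℝ)+3)*y * geg (n+1) y - ((n:ℝ)+4) * geg n y := by
  rcases Nat.even_or_odd n with he | ho
  · obtain ⟨p, rfl⟩ : ∃ p, n = 2*p := by
      obtain ⟨p, hp⟩ := he; exact ⟨p, by omega⟩
    rw [show 2*p+2 = 2*(p+1) by omega, geg_even (p+1) y,
        show 2*p+1 = 2*p+1 from rfl, geg_odd p y, geg_even p y]
    have e2 : ∑ k ∈ range (p+1+1), Ee (p+1) y k
        = (∑ i ∈ range p, Ee (p+1) y (i+1)) + Ee (p+1) y 0 + Ee (p+1) y (p+1) := by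
      rw [Finset.sum_range_succ, Finset.sum_range_succ']
    have e1 : ∑ k ∈ range (p+1), Oo p y k
        = (∑ i ∈ range p, Oo p y (i+1)) + Oo p y 0 := Finset.sum_range_succ' _ p
    have e0 : ∑ k ∈ range (p+1), Ee p y k
        = (∑ i ∈ range p, Ee p y i) + Ee p y p := Finset.sum_range_succ _ p
    have hI : (∑ i ∈ range p, (2*(p:ℝ)+2) * Ee (p+1) y (i+1))
        = ∑ i ∈ range p, (2*(2*(p:ℝ)+3)*y * Oo p y (i+1) - (2*(p:ℝ)+4) * Ee p y i) :=
      Finset.sum_congr rfl (fun i hi => even_interior p i (mem_range.mp hi) y)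
    have hd1 : (∑ i ∈ range p, (2*(p:ℝ)+2) * Ee (p+1) y (i+1))
        = (2*(p:ℝ)+2) * ∑ i ∈ range p, Ee (p+1) y (i+1) := by
      rw [Finset.mul_sum]
    have hd2 : (∑ i ∈ range p, (2*(2*(p:ℝ)+3)*y * Oo p y (i+1) - (2*(p:ℝ)+4) * Ee p y i))
        = 2*(2*(p:ℝ)+3)*y * (∑ i ∈ range p, Oo p y (i+1))
          - (2*(p:ℝ)+4) * ∑ i ∈ range p, Ee p y i := by
      rw [Finset.sum_sub_distrib, Finset.mul_sum, Finset.mul_sum]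
    have hA0 := even_k0 p y
    have hAt := even_top p y
    push_cast
    rw [e2, e1, e0]
    linear_combination hI - hd1 + hd2 + hA0 + hAt
  · obtain ⟨p, rfl⟩ : ∃ p, n = 2*p+1 := by
      obtain ⟨p, hp⟩ := ho; exact ⟨p, by omega⟩
    rw [show 2*p+1+2 = 2*(p+1)+1 by omega, geg_odd (p+1) y,
        show 2*p+1+1 = 2*(p+1) by omega, geg_even (p+1) y, geg_odd p y]
    have e2 : ∑ k ∈ range (p+1+1), Oo (p+1) y k
        = (∑ i ∈ range (p+1), Oo (p+1) y (i+1)) + Oo (p+1) y 0 :=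
      Finset.sum_range_succ' _ (p+1)
    have e1 : ∑ k ∈ range (p+1+1), Ee (p+1) y k
        = (∑ i ∈ range (p+1), Ee (p+1) y (i+1)) + Ee (p+1) y 0 :=
      Finset.sum_range_succ' _ (p+1)
    have hI : (∑ i ∈ range (p+1), (2*(p:ℝ)+3) * Oo (p+1) y (i+1))
        = ∑ i ∈ range (p+1), (2*(2*(p:ℝ)+4)*y * Ee (p+1) y (i+1) - (2*(p:ℝ)+5) * Oo p y i) :=
      Finset.sum_congr rfl (fun i hi => odd_interior p i (Nat.lt_succ_iff.mp (mem_range.mp hi)) y)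
    have hd1 : (∑ i ∈ range (p+1), (2*(p:ℝ)+3) * Oo (p+1) y (i+1))
        = (2*(p:ℝ)+3) * ∑ i ∈ range (p+1), Oo (p+1) y (i+1) := by
      rw [Finset.mul_sum]
    have hd2 : (∑ i ∈ range (p+1), (2*(2*(p:ℝ)+4)*y * Ee (p+1) y (i+1) - (2*(p:ℝ)+5) * Oo p y i))
        = 2*(2*(p:ℝ)+4)*y * (∑ i ∈ range (p+1), Ee (p+1) y (i+1))
          - (2*(p:ℝ)+5) * ∑ i ∈ range (p+1), Oo p y i := by
      rw [Finset.sum_sub_distrib, Finset.mul_sum, Finset.mul_sum]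
    have hA0 := odd_k0 p y
    push_cast
    rw [e2, e1]
    linear_combination hI - hd1 + hd2 + hA0


/-- summand of the orthogonality sum -/
noncomputable def aV (s k : ℕ) : ℝ :=
  (-1:ℝ)^k * (Nat.factorial (2*s - k + 1) : ℝ) /
    ((Nat.factorial k : ℝ) * (Nat.factorial (s-k) : ℝ) * (Nat.factorial (s-k+2) : ℝ))

/-- telescoping certificate -/
noncomputable def tV (s k : ℕ) : ℝ :=
  -(-1:ℝ)^k * (Nat.factorial (2*s + 1 - k) : ℝ) * (k : ℝ) * (2*(s:ℝ) + 2 - (k:ℝ)) /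
    ((Nat.factorial k : ℝ) * (Nat.factorial (s-k) : ℝ) * (Nat.factorial (s-k+2) : ℝ)
      * ((s:ℝ) * ((s:ℝ)+2)))

lemma tV_step (s k : ℕ) (hk : k < s) : aV s k = tV s (k+1) - tV s k := by
  obtain ⟨d, rfl⟩ : ∃ d, s = k + d + 1 := ⟨s - k - 1, by omega⟩
  unfold aV tV
  rw [show (k+d+1) - k + 2 = (d+2)+1 by omega,
      show (k+d+1) - (k+1) + 2 = (d+1)+1 by omega,
      show 2*(k+d+1) - k + 1 = (k+2*d+2)+1 by omega,
      show 2*(k+d+1) + 1 - k = (k+2*d+2)+1 by omega,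
      show 2*(k+d+1) + 1 - (k+1) = k+2*d+2 by omega,
      show (k+d+1) - k = d+1 by omega,
      show (k+d+1) - (k+1) = d by omega]
  rw [Nat.factorial_succ (k+2*d+2), Nat.factorial_succ (d+2), Nat.factorial_succ (d+1),
      Nat.factorial_succ k, Nat.factorial_succ d]
  push_cast
  have h1 : ((Nat.factorial k : ℝ)) ≠ 0 := fct k
  have h2 : ((Nat.factorial d : ℝ)) ≠ 0 := fct d
  have h3 : ((Nat.factorial (k+2*d+2) : ℝ)) ≠ 0 := fct _
  field_simp
  ring

lemma aV_sum (s : ℕ) (hs : 1 ≤ s) :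
    ∑ k ∈ range (s+1), aV s k = 0 := by
  rw [Finset.sum_range_succ]
  have h1 : ∑ k ∈ range s, aV s k = ∑ k ∈ range s, (tV s (k+1) - tV s k) :=
    Finset.sum_congr rfl (fun k hk => tV_step s k (mem_range.mp hk))
  rw [h1, Finset.sum_range_sub]
  have ht0 : tV s 0 = 0 := by unfold tV; simp
  have hts : tV s s + aV s s = 0 := by
    unfold tV aV
    rw [show 2*s + 1 - s = s+1 by omega, show s - s = 0 by omega,
        show 2*s - s + 1 = s+1 by omega]
    have h1 : ((Nat.factorial s : ℝ)) ≠ 0 := fct s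
    have hs' : ((s:ℝ)) ≠ 0 := Nat.cast_ne_zero.mpr (by omega)
    have hs2 : ((s:ℝ)+2) ≠ 0 := by positivity
    simp only [Nat.factorial]
    push_cast
    field_simp
    ring
  linarith [ht0, hts]


noncomputable def JW (f : ℝ → ℝ) : ℝ := ∫ y in (-1:ℝ)..1, f y * W y

lemma Vlem (σ : ℕ) : JW (fun y => geg (2*σ) y) = if σ = 0 then 3*Real.pi/8 else 0 := by
  unfold JW
  have h1 : ∀ y : ℝ, geg (2*σ) y * W y = ∑ k ∈ range (σ+1), Ee σ y k * W y := by
    intro y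
    rw [geg_even σ y, Finset.sum_mul]
  rw [intervalIntegral.integral_congr (fun y _ => h1 y)]
  have hint : ∀ k ∈ range (σ+1), IntervalIntegrable (fun y => Ee σ y k * W y)
      volume (-1) 1 := by
    intro k _
    apply Continuous.intervalIntegrable
    apply Continuous.mul _ W_cont
    unfold Ee
    fun_prop
  rw [intervalIntegral.integral_finset_sum hint]
  have h2 : ∀ k ∈ range (σ+1), (∫ y in (-1:ℝ)..1, Ee σ y k * W y)
      = (3*Real.pi/4) * aV σ k := by
    intro k hk
    have hk' : k ≤ σ := Nat.lt_succ_iff.mp (mem_range.mp hk)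
    have hpt : ∀ y : ℝ, Ee σ y k * W y
        = ((-1:ℝ)^k * ((Nat.factorial (2*σ - k + 1) : ℝ) /
            ((Nat.factorial k : ℝ) * (Nat.factorial (2*(σ-k)) : ℝ))) * 4^(σ-k))
          * (y ^ (2*(σ-k)) * W y) := by
      intro y
      unfold Ee
      rw [mul_pow, pow_mul, pow_mul]
      norm_num
      ring
    rw [intervalIntegral.integral_congr (fun y _ => hpt y),
      intervalIntegral.integral_const_mul]
    have : (∫ y in (-1:ℝ)..1, y ^ (2*(σ-k)) * W y) = Mom (σ-k) := rfl
    rw [this, Mom_closed (σ-k)]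
    unfold aV
    have h4 : ((4:ℝ)^(σ-k)) ≠ 0 := by positivity
    field_simp
  rw [Finset.sum_congr rfl h2, ← Finset.mul_sum]
  rcases Nat.eq_zero_or_pos σ with h | h
  · subst h
    simp [aV, Nat.factorial]
    norm_num
    ring
  · rw [aV_sum σ h, if_neg (by omega)]
    ring


lemma JW_eq (f g : ℝ → ℝ) (h : ∀ y, f y = g y) : JW f = JW g := by
  unfold JW
  exact intervalIntegral.integral_congr (fun y _ => by rw [h y])

lemma JW_smul (c : ℝ) (f : ℝ → ℝ) : JW (fun y => c * f y) = c * JW f := by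
  unfold JW
  rw [← intervalIntegral.integral_const_mul]
  exact intervalIntegral.integral_congr (fun y _ => by ring)

lemma JW_add (f g : ℝ → ℝ) (hf : Continuous f) (hg : Continuous g) :
    JW (fun y => f y + g y) = JW f + JW g := by
  unfold JW
  rw [← intervalIntegral.integral_add (intW f hf) (intW g hg)]
  exact intervalIntegral.integral_congr (fun y _ => by ring)

lemma JW_comb2 (c1 c2 : ℝ) (f1 f2 : ℝ → ℝ) (h1 : Continuous f1) (h2 : Continuous f2) :
    JW (fun y => c1 * f1 y + c2 * f2 y) = c1 * JW f1 + c2 * JW f2 := by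
  rw [JW_add _ _ (continuous_const.fun_mul h1) (continuous_const.fun_mul h2), JW_smul, JW_smul]

lemma JW_comb3 (c1 c2 c3 : ℝ) (f1 f2 f3 : ℝ → ℝ)
    (h1 : Continuous f1) (h2 : Continuous f2) (h3 : Continuous f3) :
    JW (fun y => c1 * f1 y + c2 * f2 y + c3 * f3 y)
      = c1 * JW f1 + c2 * JW f2 + c3 * JW f3 := by
  rw [JW_add _ _ ((continuous_const.fun_mul h1).fun_add (continuous_const.fun_mul h2))
    (continuous_const.fun_mul h3), JW_comb2 _ _ _ _ h1 h2, JW_smul]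

lemma JW_comb5 (c1 c2 c3 c4 c5 : ℝ) (f1 f2 f3 f4 f5 : ℝ → ℝ)
    (h1 : Continuous f1) (h2 : Continuous f2) (h3 : Continuous f3)
    (h4 : Continuous f4) (h5 : Continuous f5) :
    JW (fun y => c1 * f1 y + c2 * f2 y + c3 * f3 y + c4 * f4 y + c5 * f5 y)
      = c1 * JW f1 + c2 * JW f2 + c3 * JW f3 + c4 * JW f4 + c5 * JW f5 := by
  rw [JW_add _ _ (((((continuous_const.fun_mul h1).fun_add (continuous_const.fun_mul h2)).fun_add
      (continuous_const.fun_mul h3)).fun_add (continuous_const.fun_mul h4)))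
    (continuous_const.fun_mul h5),
    JW_add _ _ ((((continuous_const.fun_mul h1).fun_add (continuous_const.fun_mul h2)).fun_add
      (continuous_const.fun_mul h3))) (continuous_const.fun_mul h4),
    JW_comb3 _ _ _ _ _ _ h1 h2 h3, JW_smul, JW_smul]

noncomputable def Jp (γ σ : ℕ) : ℝ := JW (fun y => geg γ y * geg γ y * geg (2*σ) y)
noncomputable def Jq (γ σ : ℕ) : ℝ := JW (fun y => geg (γ+1) y * geg γ y * geg (2*σ+1) y)

noncomputable def pcl (γ σ : ℕ) : ℝ :=
  if σ ≤ γ then Real.pi * ((γ:ℝ)-(σ:ℝ)+1) * ((σ:ℝ)+1)^2 * ((γ:ℝ)+(σ:ℝ)+3)/8 else 0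
noncomputable def qq (γ σ : ℕ) : ℝ :=
  if σ ≤ γ then Real.pi * ((γ:ℝ)+1-(σ:ℝ)) * ((σ:ℝ)+1) * ((σ:ℝ)+2) * ((γ:ℝ)+(σ:ℝ)+4)/8 else 0

lemma cont3 (a b c : ℕ) : Continuous (fun y => geg a y * geg b y * geg c y) :=
  ((geg_cont a).mul (geg_cont b)).mul (geg_cont c)

/-- integral recurrence producing Jq (γ+1) -/
lemma S1 (γ σ : ℕ) :
    2*(2*(σ:ℝ)+3)*((γ:ℝ)+2) * Jq (γ+1) σ
      = 2*((γ:ℝ)+3)*(2*(σ:ℝ)+2) * Jp (γ+1) (σ+1)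
        + 2*((γ:ℝ)+3)*(2*(σ:ℝ)+4) * Jp (γ+1) σ
        + (-(2*(2*(σ:ℝ)+3)*((γ:ℝ)+4))) * Jq γ σ := by
  have hJq1 : Jq (γ+1) σ = JW (fun y => geg (γ+2) y * geg (γ+1) y * geg (2*σ+1) y) := by
    unfold Jq; rw [show γ+1+1 = γ+2 by omega]
  have hJp1 : Jp (γ+1) (σ+1) = JW (fun y => geg (γ+1) y * geg (γ+1) y * geg (2*σ+2) y) := by
    unfold Jp; rw [show 2*(σ+1) = 2*σ+2 by omega]
  rw [hJq1, hJp1]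
  unfold Jp Jq
  rw [← JW_smul, ← JW_comb3 _ _ _ _ _ _ (cont3 _ _ _) (cont3 _ _ _) (cont3 _ _ _)]
  apply JW_eq
  intro y
  have e1 := geg_rec γ y
  have e2 := geg_rec (2*σ) y
  push_cast at e2
  linear_combination (2*(2*(σ:ℝ)+3) * geg (γ+1) y * geg (2*σ+1) y) * e1
    - (2*((γ:ℝ)+3) * geg (γ+1) y * geg (γ+1) y) * e2

/-- integral recurrence producing Jp (γ+2) (σ+1) -/
lemma S2 (γ σ : ℕ) :
    2*(2*(σ:ℝ)+4)*((γ:ℝ)+2)^2 * Jp (γ+2) (σ+1)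
      = 2*((γ:ℝ)+3)*((γ:ℝ)+2)*(2*(σ:ℝ)+3) * Jq (γ+1) (σ+1)
        + 2*((γ:ℝ)+3)*((γ:ℝ)+2)*(2*(σ:ℝ)+5) * Jq (γ+1) σ
        + (-(2*((γ:ℝ)+3)*((γ:ℝ)+4)*(2*(σ:ℝ)+3))) * Jq γ (σ+1)
        + (-(2*((γ:ℝ)+3)*((γ:ℝ)+4)*(2*(σ:ℝ)+5))) * Jq γ σ
        + 2*(2*(σ:ℝ)+4)*((γ:ℝ)+4)^2 * Jp γ (σ+1) := by
  have h1 : Jp (γ+2) (σ+1) = JW (fun y => geg (γ+2) y * geg (γ+2) y * geg (2*σ+2) y) := by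
    unfold Jp; rw [show 2*(σ+1) = 2*σ+2 by omega]
  have h2 : Jq (γ+1) (σ+1) = JW (fun y => geg (γ+2) y * geg (γ+1) y * geg (2*σ+3) y) := by
    unfold Jq; rw [show γ+1+1 = γ+2 by omega, show 2*(σ+1)+1 = 2*σ+3 by omega]
  have h3 : Jq (γ+1) σ = JW (fun y => geg (γ+2) y * geg (γ+1) y * geg (2*σ+1) y) := by
    unfold Jq; rw [show γ+1+1 = γ+2 by omega]
  have h4 : Jq γ (σ+1) = JW (fun y => geg (γ+1) y * geg γ y * geg (2*σ+3) y) := by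
    unfold Jq; rw [show 2*(σ+1)+1 = 2*σ+3 by omega]
  have h5 : Jp γ (σ+1) = JW (fun y => geg γ y * geg γ y * geg (2*σ+2) y) := by
    unfold Jp; rw [show 2*(σ+1) = 2*σ+2 by omega]
  rw [h1, h2, h3, h4, h5]
  unfold Jq
  rw [← JW_smul, ← JW_comb5 _ _ _ _ _ _ _ _ _ _ (cont3 _ _ _) (cont3 _ _ _)
    (cont3 _ _ _) (cont3 _ _ _) (cont3 _ _ _)]
  apply JW_eq
  intro y
  have e1 := geg_rec γ y
  have e2 := geg_rec (2*σ+1) y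
  push_cast at e2
  linear_combination
    (2*(2*(σ:ℝ)+4) * geg (2*σ+2) y *
      (((γ:ℝ)+2) * geg (γ+2) y - ((γ:ℝ)+4) * geg γ y)) * e1
    - (2*((γ:ℝ)+3) * geg (γ+1) y *
      (((γ:ℝ)+2) * geg (γ+2) y - ((γ:ℝ)+4) * geg γ y)) * e2

/-- integral recurrence producing Jp (γ+2) 0 -/
lemma S20 (γ : ℕ) :
    2*((γ:ℝ)+2)^2 * Jp (γ+2) 0
      = ((γ:ℝ)+3)*((γ:ℝ)+2) * Jq (γ+1) 0
        + (-(((γ:ℝ)+3)*((γ:ℝ)+4))) * Jq γ 0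
        + 2*((γ:ℝ)+4)^2 * Jp γ 0 := by
  have h1 : Jq (γ+1) 0 = JW (fun y => geg (γ+2) y * geg (γ+1) y * geg 1 y) := by
    unfold Jq; rw [show γ+1+1 = γ+2 by omega, show 2*0+1 = 1 by omega]
  have h2 : Jq γ 0 = JW (fun y => geg (γ+1) y * geg γ y * geg 1 y) := by
    unfold Jq; rw [show 2*0+1 = 1 by omega]
  rw [h1, h2]
  unfold Jp
  rw [← JW_smul, ← JW_comb3 _ _ _ _ _ _ (cont3 _ _ _) (cont3 _ _ _) (cont3 _ _ _)]
  apply JW_eq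
  intro y
  have e1 := geg_rec γ y
  have eG1 := geg_one y
  have eG0 := geg_zero y
  have hz : geg (2*0) y = geg 0 y := by norm_num
  rw [hz]
  linear_combination
    (2 * (((γ:ℝ)+2) * geg (γ+2) y - ((γ:ℝ)+4) * geg γ y)) * e1
    - (((γ:ℝ)+3) * geg (γ+1) y *
        (((γ:ℝ)+2) * geg (γ+2) y - ((γ:ℝ)+4) * geg γ y)) * eG1
    + (2*(((γ:ℝ)+2) * geg (γ+2) y + ((γ:ℝ)+4) * geg γ y) *
        (((γ:ℝ)+2) * geg (γ+2) y - ((γ:ℝ)+4) * geg γ y)) * eG0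

lemma pcl_le {γ σ : ℕ} (h : σ ≤ γ) :
    pcl γ σ = Real.pi * ((γ:ℝ)-(σ:ℝ)+1) * ((σ:ℝ)+1)^2 * ((γ:ℝ)+(σ:ℝ)+3)/8 := if_pos h

lemma pcl_gt {γ σ : ℕ} (h : ¬ σ ≤ γ) : pcl γ σ = 0 := if_neg h

lemma qq_le {γ σ : ℕ} (h : σ ≤ γ) :
    qq γ σ = Real.pi * ((γ:ℝ)+1-(σ:ℝ)) * ((σ:ℝ)+1) * ((σ:ℝ)+2) * ((γ:ℝ)+(σ:ℝ)+4)/8 := if_pos h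

lemma qq_gt {γ σ : ℕ} (h : ¬ σ ≤ γ) : qq γ σ = 0 := if_neg h

/-- closed forms satisfy the S1 recurrence -/
lemma L1 (γ σ : ℕ) :
    2*(2*(σ:ℝ)+3)*((γ:ℝ)+2) * qq (γ+1) σ
      = 2*((γ:ℝ)+3)*(2*(σ:ℝ)+2) * pcl (γ+1) (σ+1)
        + 2*((γ:ℝ)+3)*(2*(σ:ℝ)+4) * pcl (γ+1) σ
        + (-(2*(2*(σ:ℝ)+3)*((γ:ℝ)+4))) * qq γ σ := by
  rcases le_or_gt σ γ with h | h
  · rw [qq_le (show σ ≤ γ+1 by omega), pcl_le (show σ+1 ≤ γ+1 by omega),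
      pcl_le (show σ ≤ γ+1 by omega), qq_le h]
    push_cast; ring
  · rcases eq_or_lt_of_le (show γ+1 ≤ σ by omega) with h2 | h2
    · obtain rfl : σ = γ + 1 := h2.symm
      rw [qq_le (le_refl (γ+1)), pcl_gt (by omega), pcl_le (le_refl (γ+1)),
        qq_gt (by omega)]
      push_cast; ring
    · rw [qq_gt (by omega), pcl_gt (by omega), pcl_gt (by omega), qq_gt (by omega)]
      ring

lemma L2 (γ σ : ℕ) :
    2*(2*(σ:ℝ)+4)*((γ:ℝ)+2)^2 * pcl (γ+2) (σ+1)
      = 2*((γ:ℝ)+3)*((γ:ℝ)+2)*(2*(σ:ℝ)+3) * qq (γ+1) (σ+1)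
        + 2*((γ:ℝ)+3)*((γ:ℝ)+2)*(2*(σ:ℝ)+5) * qq (γ+1) σ
        + (-(2*((γ:ℝ)+3)*((γ:ℝ)+4)*(2*(σ:ℝ)+3))) * qq γ (σ+1)
        + (-(2*((γ:ℝ)+3)*((γ:ℝ)+4)*(2*(σ:ℝ)+5))) * qq γ σ
        + 2*(2*(σ:ℝ)+4)*((γ:ℝ)+4)^2 * pcl γ (σ+1) := by
  rcases lt_or_ge σ γ with h | h
  · -- σ + 1 ≤ γ : everything interior
    rw [pcl_le (show σ+1 ≤ γ+2 by omega), qq_le (show σ+1 ≤ γ+1 by omega),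
      qq_le (show σ ≤ γ+1 by omega), qq_le (show σ+1 ≤ γ by omega),
      qq_le (show σ ≤ γ by omega), pcl_le (show σ+1 ≤ γ by omega)]
    push_cast; ring
  · rcases eq_or_lt_of_le h with h2 | h2
    · obtain rfl : σ = γ := h2.symm
      rw [pcl_le (show σ+1 ≤ σ+2 by omega), qq_le (show σ+1 ≤ σ+1 by omega),
        qq_le (show σ ≤ σ+1 by omega), qq_gt (show ¬ σ+1 ≤ σ by omega),
        qq_le (le_refl σ), pcl_gt (show ¬ σ+1 ≤ σ by omega)]
      push_cast; ring
    · rcases eq_or_lt_of_le (show γ+1 ≤ σ by omega) with h3 | h3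
      · obtain rfl : σ = γ + 1 := h3.symm
        rw [pcl_le (show γ+2 ≤ γ+2 by omega), qq_gt (show ¬ γ+2 ≤ γ+1 by omega),
          qq_le (show γ+1 ≤ γ+1 by omega), qq_gt (show ¬ γ+2 ≤ γ by omega),
          qq_gt (show ¬ γ+1 ≤ γ by omega), pcl_gt (show ¬ γ+2 ≤ γ by omega)]
        push_cast; ring
      · rw [pcl_gt (by omega), qq_gt (by omega), qq_gt (by omega), qq_gt (by omega),
          qq_gt (by omega), pcl_gt (by omega)]
        ring

lemma L20 (γ : ℕ) :
    2*((γ:ℝ)+2)^2 * pcl (γ+2) 0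
      = ((γ:ℝ)+3)*((γ:ℝ)+2) * qq (γ+1) 0
        + (-(((γ:ℝ)+3)*((γ:ℝ)+4))) * qq γ 0
        + 2*((γ:ℝ)+4)^2 * pcl γ 0 := by
  rw [pcl_le (show 0 ≤ γ+2 by omega), qq_le (show 0 ≤ γ+1 by omega),
    qq_le (show 0 ≤ γ by omega), pcl_le (show 0 ≤ γ by omega)]
  push_cast
  ring


/-- weighted integral of y * geg(2sigma+1) -/
lemma YV (σ : ℕ) : JW (fun y => y * geg (2*σ+1) y) = if σ = 0 then Real.pi/4 else 0 := by
  have key : 2*(2*(σ:ℝ)+3) * JW (fun y => y * geg (2*σ+1) y)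
      = (2*(σ:ℝ)+2) * JW (fun y => geg (2*σ+2) y)
        + (2*(σ:ℝ)+4) * JW (fun y => geg (2*σ) y) := by
    rw [← JW_smul, ← JW_comb2 _ _ _ _ (geg_cont (2*σ+2)) (geg_cont (2*σ))]
    apply JW_eq
    intro y
    have e2 := geg_rec (2*σ) y
    push_cast at e2
    linear_combination (-1 : ℝ) * e2
  have hv2 : JW (fun y => geg (2*σ+2) y) = 0 := by
    rw [show 2*σ+2 = 2*(σ+1) by omega, Vlem (σ+1)]
    simp
  rw [hv2, Vlem σ] at key
  rcases Nat.eq_zero_or_pos σ with h | h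
  · subst h
    rw [if_pos rfl] at key ⊢
    push_cast at key
    linarith
  · rw [if_neg (by omega)] at key ⊢
    have h2 : (2*(2*(σ:ℝ)+3)) ≠ 0 := by positivity
    apply mul_left_cancel₀ h2
    rw [mul_zero]
    linarith [key]

lemma Jp0 (σ : ℕ) : Jp 0 σ = pcl 0 σ := by
  have h : Jp 0 σ = JW (fun y => geg (2*σ) y) := by
    unfold Jp
    apply JW_eq
    intro y
    rw [geg_zero]
    ring
  rw [h, Vlem]
  rcases Nat.eq_zero_or_pos σ with h2 | h2
  · subst h2
    rw [if_pos rfl, pcl_le (le_refl 0)]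
    norm_num
    ring
  · rw [if_neg (by omega), pcl_gt (by omega)]

lemma Jq0 (σ : ℕ) : Jq 0 σ = qq 0 σ := by
  have h : Jq 0 σ = 4 * JW (fun y => y * geg (2*σ+1) y) := by
    rw [← JW_smul]
    unfold Jq
    apply JW_eq
    intro y
    rw [geg_one, geg_zero]
    ring
  rw [h, YV]
  rcases Nat.eq_zero_or_pos σ with h2 | h2
  · subst h2
    rw [if_pos rfl, qq_le (le_refl 0)]
    norm_num
    ring
  · rw [if_neg (by omega), qq_gt (by omega)]
    ring

lemma Jp1 (σ : ℕ) : Jp 1 σ = pcl 1 σ := by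
  cases σ with
  | zero =>
    have h : Jp 1 0 = 4 * JW (fun y => y * geg (2*0+1) y) := by
      rw [← JW_smul]
      unfold Jp
      apply JW_eq
      intro y
      rw [show 2*0 = 0 by omega, geg_zero, show 2*0+1 = 1 by omega, geg_one]
      ring
    rw [h, YV 0, if_pos rfl, pcl_le (by omega)]
    norm_num
    ring
  | succ s =>
    have key : (2*(s:ℝ)+3)*(2*(s:ℝ)+4)*(2*(s:ℝ)+5) * Jp 1 (s+1)
        = 4*(2*(s:ℝ)+3)^2*(2*(s:ℝ)+4) * JW (fun y => geg (2*s+4) y)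
          + 4*((2*(s:ℝ)+3)^2*(2*(s:ℝ)+6) + (2*(s:ℝ)+5)^2*(2*(s:ℝ)+2))
            * JW (fun y => geg (2*s+2) y)
          + 4*(2*(s:ℝ)+5)^2*(2*(s:ℝ)+4) * JW (fun y => geg (2*s) y) := by
      have hJ : Jp 1 (s+1) = JW (fun y => geg 1 y * geg 1 y * geg (2*s+2) y) := by
        unfold Jp
        rw [show 2*(s+1) = 2*s+2 by omega]
      rw [hJ, ← JW_smul, ← JW_comb3 _ _ _ _ _ _ (geg_cont (2*s+4)) (geg_cont (2*s+2))
        (geg_cont (2*s))]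
      apply JW_eq
      intro y
      have h1 := geg_rec (2*s+1) y
      have h2 := geg_rec (2*s+2) y
      have h3 := geg_rec (2*s) y
      have hG := geg_one y
      push_cast at h1 h2 h3
      linear_combination
        (-(8*(2*(s:ℝ)+3)*(2*(s:ℝ)+5)*y)) * h1
        - (4*(2*(s:ℝ)+3)^2) * h2
        - (4*(2*(s:ℝ)+5)^2) * h3
        + ((2*(s:ℝ)+3)*(2*(s:ℝ)+4)*(2*(s:ℝ)+5) * geg (2*s+2) y * (geg 1 y + 4*y)) * hG
    have hv4 : JW (fun y => geg (2*s+4) y) = 0 := by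
      rw [show 2*s+4 = 2*(s+2) by omega, Vlem (s+2)]; simp
    have hv2 : JW (fun y => geg (2*s+2) y) = 0 := by
      rw [show 2*s+2 = 2*(s+1) by omega, Vlem (s+1)]; simp
    rw [hv4, hv2, Vlem s] at key
    rcases Nat.eq_zero_or_pos s with h | h
    · subst h
      rw [if_pos rfl] at key
      rw [pcl_le (by omega)]
      push_cast at key ⊢
      nlinarith [key, Real.pi_pos]
    · rw [if_neg (by omega)] at key
      rw [pcl_gt (by omega)]
      have hne : ((2*(s:ℝ)+3)*(2*(s:ℝ)+4)*(2*(s:ℝ)+5)) ≠ 0 := by positivity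
      apply mul_left_cancel₀ hne
      rw [mul_zero]
      linarith [key]

/-- the master induction -/
theorem master (γ : ℕ) :
    (∀ σ, Jp γ σ = pcl γ σ) ∧ (∀ σ, Jp (γ+1) σ = pcl (γ+1) σ)
      ∧ (∀ σ, Jq γ σ = qq γ σ) := by
  induction γ with
  | zero => exact ⟨Jp0, Jp1, Jq0⟩
  | succ n ih =>
    obtain ⟨hp0, hp1, hq⟩ := ih
    have hq1 : ∀ σ, Jq (n+1) σ = qq (n+1) σ := by
      intro σ
      have hS := S1 n σ
      rw [hp1 (σ+1), hp1 σ, hq σ] at hS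
      have hL := L1 n σ
      have hne : (2*(2*(σ:ℝ)+3)*((n:ℝ)+2)) ≠ 0 := by positivity
      apply mul_left_cancel₀ hne
      rw [hS, hL]
    have hp2 : ∀ σ, Jp (n+2) σ = pcl (n+2) σ := by
      intro σ
      cases σ with
      | zero =>
        have hS := S20 n
        rw [hq1 0, hq 0, hp0 0] at hS
        have hL := L20 n
        have hne : (2*((n:ℝ)+2)^2) ≠ 0 := by positivity
        apply mul_left_cancel₀ hne
        rw [hS, hL]
      | succ s =>
        have hS := S2 n s
        rw [hq1 (s+1), hq1 s, hq (s+1), hq s, hp0 (s+1)] at hS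
        have hL := L2 n s
        have hne : (2*(2*(s:ℝ)+4)*((n:ℝ)+2)^2) ≠ 0 := by positivity
        apply mul_left_cancel₀ hne
        rw [hS, hL]
    refine ⟨hp1, fun σ => ?_, hq1⟩
    rw [show n+1+1 = n+2 by omega]
    exact hp2 σ


lemma Jp_eval (γ σ : ℕ) : Jp γ σ = pcl γ σ := (master γ).1 σ

lemma wsq (n : ℕ) : (wYM n)^2 = 8/(Real.pi*((n:ℝ)+1)*((n:ℝ)+3)) := by
  unfold wYM
  rw [div_pow, Real.sq_sqrt (by positivity : (0:ℝ) ≤ 8/Real.pi),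
    Real.sq_sqrt (by positivity : (0:ℝ) ≤ ((n:ℝ)+1)*((n:ℝ)+3))]
  have h1 : Real.pi ≠ 0 := Real.pi_ne_zero
  have h2 : ((n:ℝ)+1) ≠ 0 := by positivity
  have h3 : ((n:ℝ)+3) ≠ 0 := by positivity
  field_simp

/-- polynomial giving the partial sums -/
noncomputable def Pp (x t : ℝ) : ℝ :=
  201*t + 162*t^2 - 75*t^3 - 30*t^4 + 9*t^5 + 3*t^6
  + 440*x*t + 400*x*t^2 - 80*x*t^3 - 40*x*t^4
  + 350*x^2*t + 340*x^2*t^2 - 20*x^2*t^3 - 10*x^2*t^4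
  + 120*x^3*t + 120*x^3*t^2 + 15*x^4*t + 15*x^4*t^2

lemma keySum (x : ℝ) (n : ℕ) :
    ∑ τ ∈ range n, (x-(τ:ℝ)+1)^2*((τ:ℝ)+1)^2*(x+(τ:ℝ)+3)^2/((2*(τ:ℝ)+1)*(2*(τ:ℝ)+3))
      = Pp x (n:ℝ) / (30*(2*(n:ℝ)+1)) := by
  induction n with
  | zero => simp [Pp]
  | succ m ih =>
    rw [Finset.sum_range_succ, ih]
    have h1 : (2*(m:ℝ)+1) ≠ 0 := by positivity
    have h2 : (2*(m:ℝ)+3) ≠ 0 := by positivity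
    have h3 : (2*((m:ℕ):ℝ)+1) ≠ 0 := by positivity
    push_cast
    rw [div_add_div _ _ (by positivity) (by positivity)]
    rw [div_eq_div_iff (by positivity) (by positivity)]
    unfold Pp
    ring

/-- Closed evaluation of the weighted square sum of the coefficients `𝔠̄_{γ,γ,2τ}`. -/
theorem cbar_weighted_square_sum (γ : ℕ) :
    ∑ τ ∈ Finset.range (γ + 1), (cbar γ γ (2 * τ)) ^ 2 / (2 * (τ:ℝ) + 2) ^ 2 =
      ((γ:ℝ) + 2) * (2 * (γ:ℝ) + 3) * (2 * (γ:ℝ) + 5) /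
        (15 * Real.pi * ((γ:ℝ) + 1) * ((γ:ℝ) + 3)) := by
  have hπ : Real.pi ≠ 0 := Real.pi_ne_zero
  have hterm : ∀ τ ∈ range (γ+1), (cbar γ γ (2*τ))^2 / (2*(τ:ℝ)+2)^2
      = (2/(Real.pi*((γ:ℝ)+1)^2*((γ:ℝ)+3)^2))
        * (((γ:ℝ)-(τ:ℝ)+1)^2*((τ:ℝ)+1)^2*((γ:ℝ)+(τ:ℝ)+3)^2
            /((2*(τ:ℝ)+1)*(2*(τ:ℝ)+3))) := by
    intro τ hτ
    have hτγ : τ ≤ γ := by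
      have := mem_range.mp hτ; omega
    have hc : cbar γ γ (2*τ) = wYM γ * wYM γ * wYM (2*τ) * Jp γ τ := rfl
    rw [hc, Jp_eval γ τ, pcl_le hτγ]
    have expand : ∀ X : ℝ, (wYM γ * wYM γ * wYM (2*τ) * X)^2
        = ((wYM γ)^2)^2 * (wYM (2*τ))^2 * X^2 := by intro X; ring
    rw [expand, wsq γ, wsq (2*τ)]
    have e2 : ((2*τ : ℕ):ℝ) = 2*(τ:ℝ) := by push_cast; ring
    rw [e2]
    have h1 : ((γ:ℝ)+1) ≠ 0 := by positivity
    have h3 : ((γ:ℝ)+3) ≠ 0 := by positivity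
    have h4 : (2*(τ:ℝ)+1) ≠ 0 := by positivity
    have h5 : (2*(τ:ℝ)+3) ≠ 0 := by positivity
    have h6 : (2*(τ:ℝ)+2) ≠ 0 := by positivity
    field_simp
    ring
  rw [Finset.sum_congr rfl hterm, ← Finset.mul_sum, keySum ((γ:ℝ)) (γ+1)]
  have h1 : ((γ:ℝ)+1) ≠ 0 := by positivity
  have h3 : ((γ:ℝ)+3) ≠ 0 := by positivity
  have h7 : (2*((γ:ℝ)+1)+1) ≠ 0 := by positivity
  push_cast
  unfold Pp
  field_simp
  ring
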